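/- Let s ≥ 2 and let t_1,…,t_s be nonnegative integers with t_1 ≥ 1 such that the binary code Φ(H^{t_1,…,t_s}) is not linear. Then the dimension of the kernel satisfies ker(Φ(H^{t_1,…,t_s})) ≥ σ + Σ_{i=1}^s t_i. -/

import Mathlib

/-- The `i`-th digit of the binary expansion of `u : ZMod (2^s)`. -/
def gdigit (s : ℕ) (u : ZMod (2^s)) (i : ℕ) : ZMod 2 :=
  if (ZMod.val u).testBit i then 1 else 0

/-- Carlet's generalized Gray map `φ : ZMod (2^s) → (Z_2^{s-1} → Z_2)`:
the coordinate indexed by `y ∈ Z_2^{s-1}` is `u_{s-1} + ∑ u_i y_i`. -/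
def gray (s : ℕ) (u : ZMod (2^s)) : (Fin (s - 1) → ZMod 2) → ZMod 2 :=
  fun y => gdigit s u (s - 1) + ∑ i : Fin (s - 1), gdigit s u (i : ℕ) * y i

/-- The coordinatewise extension `Φ` of the Gray map, on vectors indexed by `ι`. -/
def PhiMap {ι : Type} (s : ℕ) (u : ι → ZMod (2^s)) :
    ι × (Fin (s - 1) → ZMod 2) → ZMod 2 :=
  fun p => gray s (u p.1) p.2

/-- A binary code is linear if it is closed under addition. -/
def IsLinearCode {V : Type} [Add V] (C : Set V) : Prop :=
  ∀ x ∈ C, ∀ y ∈ C, x + y ∈ C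

/-- The kernel `K(C) = {x : x + C = C}` of a binary code. -/
def kernelSet {V : Type} [Add V] (C : Set V) : Set V :=
  {x | (fun c => x + c) '' C = C}

/-- The dimension over `Z_2` of the kernel of a binary code. -/
noncomputable def kerDim {ι : Type} (C : Set (ι → ZMod 2)) : ℕ :=
  Module.finrank (ZMod 2) (Submodule.span (ZMod 2) (kernelSet C))

/-- `τ = t_1 + ⋯ + t_s`, the number of rows of the generator matrix. -/
def tauSum (s : ℕ) (t : ℕ → ℕ) : ℕ := ∑ i ∈ Finset.Icc 1 s, t i

/-- `T_i = {j·2^{i-1} : 0 ≤ j ≤ 2^{s-i+1}-1} ⊆ ZMod (2^s)` (here `i` is 1-based). -/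
def Tset (s i : ℕ) : Set (ZMod (2^s)) :=
  {x | ∃ j : ℕ, j < 2 ^ (s - i + 1) ∧ x = (j : ZMod (2^s)) * 2 ^ (i - 1)}

/-- The block (1-based) containing the 1-based row position `p`:
the least `i ≥ 1` with `p ≤ t_1 + ⋯ + t_i`. -/
noncomputable def blockIdx (t : ℕ → ℕ) (p : ℕ) : ℕ :=
  sInf {i : ℕ | 1 ≤ i ∧ p ≤ ∑ j ∈ Finset.Icc 1 i, t j}

/-- A column of the generator matrix `A^{t_1,…,t_s}`: an element of
`{1} × T_1^{t_1-1} × T_2^{t_2} × ⋯ × T_s^{t_s}`. -/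
def IsHadCol (s : ℕ) (t : ℕ → ℕ) (z : Fin (tauSum s t) → ZMod (2^s)) : Prop :=
  (∀ q : Fin (tauSum s t), (q : ℕ) = 0 → z q = 1) ∧
  (∀ q : Fin (tauSum s t), 1 ≤ (q : ℕ) → z q ∈ Tset s (blockIdx t ((q : ℕ) + 1)))

/-- The type indexing the columns of `A^{t_1,…,t_s}` (hence the coordinates of the code). -/
abbrev ColIdx (s : ℕ) (t : ℕ → ℕ) : Type :=
  {z : Fin (tauSum s t) → ZMod (2^s) // IsHadCol s t z}

noncomputable instance (s : ℕ) (t : ℕ → ℕ) : Fintype (ColIdx s t) :=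
  Fintype.ofFinite _

/-- The `Z_{2^s}`-additive Hadamard code `H^{t_1,…,t_s}`: the subgroup generated by
the rows of `A^{t_1,…,t_s}` (row `q` sends the column `z` to its `q`-th entry). -/
def hadamardCode (s : ℕ) (t : ℕ → ℕ) : AddSubgroup (ColIdx s t → ZMod (2^s)) :=
  AddSubgroup.closure (Set.range (fun (q : Fin (tauSum s t)) => fun z : ColIdx s t => z.val q))

/-- `σ = 1` if `t_1 > 1`, and `σ = min {i ∈ {2,…,s} : t_i > 0}` if `t_1 = 1`. -/
noncomputable def sigmaIdx (s : ℕ) (t : ℕ → ℕ) : ℕ :=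
  if 1 < t 1 then 1 else sInf {i : ℕ | 2 ≤ i ∧ i ≤ s ∧ 0 < t i}

/-! ### Auxiliary lemmas -/

theorem myXorAdd : ∀ a b : ℕ, (a ^^^ b) + 2 * (a &&& b) = a + b := by
  intro a
  induction a using Nat.binaryRec with
  | zero => simp
  | bit ab m ih =>
    intro b
    induction b using Nat.binaryRec with
    | zero => simp
    | bit bb n _ =>
      have := ih n
      simp only [Nat.xor_bit, Nat.land_bit]
      simp only [Nat.bit_val]
      cases ab <;> cases bb <;> simp [Bool.toNat] <;> omega

theorem myAndMod (k a y : ℕ) (h : a < 2 ^ k) : a &&& y = a &&& (y % 2 ^ k) := by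
  apply Nat.eq_of_testBit_eq
  intro i
  rw [Nat.testBit_and, Nat.testBit_and, Nat.testBit_mod_two_pow]
  by_cases hi : i < k
  · simp [hi]
  · have : a.testBit i = false :=
      Nat.testBit_lt_two_pow (lt_of_lt_of_le h (Nat.pow_le_pow_right (by norm_num) (by omega)))
    simp [this]

theorem myMidAnd (k s : ℕ) (hk : k < s - 1) (y : ℕ) :
    (2 ^ (s-1) - 2 ^ k) &&& y = 2 ^ k * ((y % 2 ^ (s-1)) / 2 ^ k) := by
  apply Nat.eq_of_testBit_eq
  intro i
  have hm : 2 ^ (s-1) - 2 ^ k = (2 ^ (s-1-k) - 1) <<< k := by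
    rw [Nat.shiftLeft_eq, Nat.sub_mul, one_mul, ← pow_add]
    congr 2
    omega
  have hr : 2 ^ k * ((y % 2 ^ (s-1)) / 2 ^ k) = ((y % 2 ^ (s-1)) >>> k) <<< k := by
    rw [Nat.shiftRight_eq_div_pow, Nat.shiftLeft_eq, mul_comm]
  rw [hm, hr, Nat.testBit_and, Nat.testBit_shiftLeft, Nat.testBit_shiftLeft,
    Nat.testBit_shiftRight, Nat.testBit_two_pow_sub_one, Nat.testBit_mod_two_pow]
  by_cases h1 : k ≤ i
  · have he : k + (i - k) = i := by omega
    rw [he]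
    by_cases h2 : i < s - 1 <;> simp [h1, h2] <;> omega
  · simp [h1]

theorem myMidBit (k s : ℕ) (hk : k < s - 1) (i : ℕ) :
    (2 ^ (s-1) - 2 ^ k).testBit i = (decide (k ≤ i) && decide (i < s - 1)) := by
  have hm : 2 ^ (s-1) - 2 ^ k = (2 ^ (s-1-k) - 1) <<< k := by
    rw [Nat.shiftLeft_eq, Nat.sub_mul, one_mul, ← pow_add]
    congr 2
    omega
  rw [hm, Nat.testBit_shiftLeft, Nat.testBit_two_pow_sub_one]
  by_cases h1 : k ≤ i
  · by_cases h2 : i < s - 1 <;> simp [h1, h2] <;> omega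
  · simp [h1]

instance myNeZeroPow (s : ℕ) : NeZero (2 ^ s) := ⟨pow_ne_zero _ two_ne_zero⟩

/-- Bitwise xor on `ZMod (2^s)`. -/
def zxor (s : ℕ) (u v : ZMod (2^s)) : ZMod (2^s) :=
  ((ZMod.val u ^^^ ZMod.val v : ℕ) : ZMod (2^s))

theorem myCastVal {n : ℕ} [NeZero n] (a : ZMod n) : ((ZMod.val a : ℕ) : ZMod n) = a := by
  rw [ZMod.natCast_val, ZMod.cast_id]

theorem zxor_val {s : ℕ} (u v : ZMod (2^s)) :
    ZMod.val (zxor s u v) = ZMod.val u ^^^ ZMod.val v :=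
  ZMod.val_cast_of_lt (Nat.xor_lt_two_pow (ZMod.val_lt u) (ZMod.val_lt v))

theorem zxor_comm {s : ℕ} (u v : ZMod (2^s)) : zxor s u v = zxor s v u := by
  unfold zxor; rw [Nat.xor_comm]

theorem zxor_cancel {s : ℕ} (u v : ZMod (2^s)) : zxor s u (zxor s u v) = v := by
  rw [show zxor s u (zxor s u v)
      = ((ZMod.val u ^^^ ZMod.val (zxor s u v) : ℕ) : ZMod (2^s)) from rfl]
  rw [zxor_val, ← Nat.xor_assoc, Nat.xor_self, Nat.zero_xor, myCastVal]

theorem zxor_eq {s : ℕ} (u v : ZMod (2^s)) :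
    zxor s u v = u + v - 2 * ((ZMod.val u &&& ZMod.val v : ℕ) : ZMod (2^s)) := by
  have h := congrArg (Nat.cast : ℕ → ZMod (2^s)) (myXorAdd (ZMod.val u) (ZMod.val v))
  push_cast at h
  rw [myCastVal, myCastVal] at h
  unfold zxor
  linear_combination h

theorem gdigit_zxor {s : ℕ} (u v : ZMod (2^s)) (i : ℕ) :
    gdigit s (zxor s u v) i = gdigit s u i + gdigit s v i := by
  unfold gdigit
  rw [zxor_val, Nat.testBit_xor]
  cases hu : (ZMod.val u).testBit i <;> cases hv : (ZMod.val v).testBit i <;> simp <;> decide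

theorem gray_zxor {s : ℕ} (u v : ZMod (2^s)) (y : Fin (s-1) → ZMod 2) :
    gray s (zxor s u v) y = gray s u y + gray s v y := by
  unfold gray
  rw [gdigit_zxor]
  rw [Finset.sum_congr rfl (fun i _ => by rw [gdigit_zxor, add_mul])]
  rw [Finset.sum_add_distrib]
  ring

theorem PhiMap_zxor {ι : Type} {s : ℕ} (u v : ι → ZMod (2^s)) :
    PhiMap s (fun z => zxor s (u z) (v z)) = PhiMap s u + PhiMap s v := by
  funext p
  exact gray_zxor (u p.1) (v p.1) p.2

theorem val_two_eq_zero {s : ℕ} (hs : 1 ≤ s) {x : ZMod (2^s)} (h : 2 * x = 0) :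
    ZMod.val x = 0 ∨ ZMod.val x = 2^(s-1) := by
  have hlt := ZMod.val_lt x
  have h2 : ZMod.val (2 * x) = 0 := by rw [h, ZMod.val_zero]
  rw [two_mul, ZMod.val_add] at h2
  have hd : 2^s ∣ ZMod.val x + ZMod.val x := Nat.dvd_of_mod_eq_zero h2
  obtain ⟨c, hc⟩ := hd
  have hs2 : 2^s = 2 * 2^(s-1) := by
    rw [← pow_succ']
    congr 1
    omega
  have hc2 : c < 2 := by
    by_contra hcc
    push_neg at hcc
    have h3 : 2^s * 2 ≤ 2^s * c := Nat.mul_le_mul_left _ hcc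
    omega
  interval_cases c <;> omega

theorem two_pow_s_eq_zero (s : ℕ) : ((2^s : ℕ) : ZMod (2^s)) = 0 := ZMod.natCast_self _

theorem zxor_order2 {s : ℕ} (hs : 1 ≤ s) {g : ZMod (2^s)} (h : 2 * g = 0) (x : ZMod (2^s)) :
    zxor s g x = g + x := by
  rcases val_two_eq_zero hs h with h0 | h1
  · have hg : g = 0 := by
      have := myCastVal g
      rw [h0] at this
      simpa using this.symm
    subst hg
    unfold zxor
    rw [ZMod.val_zero, Nat.zero_xor, myCastVal, zero_add]
  · rw [zxor_eq, h1]
    have hz : (2 : ZMod (2^s)) * (((2^(s-1) &&& ZMod.val x : ℕ)) : ZMod (2^s)) = 0 := by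
      rw [Nat.two_pow_and]
      cases hb : (ZMod.val x).testBit (s-1)
      · simp [Bool.toNat]
      · have hnat : (2 * (2^(s-1) * Bool.toNat true) : ℕ) = 2^s := by
          have hs2 : (2:ℕ)^s = 2*2^(s-1) := by rw [← pow_succ']; congr 1; omega
          simp only [Bool.toNat, cond_true, mul_one]
          omega
        rw [show (2 : ZMod (2^s)) * ((2^(s-1) * Bool.toNat true : ℕ) : ZMod (2^s))
            = ((2 * (2^(s-1) * Bool.toNat true) : ℕ) : ZMod (2^s)) by push_cast; ring]
        rw [hnat, two_pow_s_eq_zero]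
    rw [hz, sub_zero]

theorem zxor_low {s k : ℕ} {a : ZMod (2^s)} (ha : ZMod.val a < 2^k) (x : ZMod (2^s)) :
    zxor s a x = x + (a - 2 * (((ZMod.val a &&& (ZMod.val x % 2^k)) : ℕ) : ZMod (2^s))) := by
  rw [zxor_eq, ← myAndMod k _ _ ha]
  ring

theorem zxor_mid {s : ℕ} (k : ℕ) (hk : k < s - 1) (x : ZMod (2^s)) :
    zxor s (((2^(s-1) - 2^k : ℕ)) : ZMod (2^s)) x
      = ((2^(s-1) - 2^k : ℕ) : ZMod (2^s)) + 2 * ((ZMod.val x % 2^k : ℕ) : ZMod (2^s)) - x := by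
  have hs1 : 1 ≤ s := by omega
  have hmlt : 2^(s-1) - 2^k < 2^s :=
    lt_of_le_of_lt (Nat.sub_le _ _) (Nat.pow_lt_pow_right (by norm_num) (by omega))
  have hval : ZMod.val (((2^(s-1) - 2^k : ℕ)) : ZMod (2^s)) = 2^(s-1) - 2^k :=
    ZMod.val_cast_of_lt hmlt
  rw [zxor_eq, hval, myMidAnd k s hk]
  set y := ZMod.val x with hy
  have e1 : 2^k * ((y % 2^(s-1)) / 2^k) = y % 2^(s-1) - y % 2^k := by
    have h1 : y % 2^k = (y % 2^(s-1)) % 2^k :=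
      (Nat.mod_mod_of_dvd _ (pow_dvd_pow 2 (by omega))).symm
    have h2 := Nat.div_add_mod (y % 2^(s-1)) (2^k)
    omega
  have e2 : 2 * (2^k * ((y % 2^(s-1)) / 2^k)) + 2 * (y % 2^k) + 2^s * (y / 2^(s-1)) = 2 * y := by
    have h3 := Nat.div_add_mod y (2^(s-1))
    have hs5 : 2^s * (y / 2^(s-1)) = 2 * (2^(s-1) * (y / 2^(s-1))) := by
      rw [show (2:ℕ)^s = 2 * 2^(s-1) by rw [← pow_succ']; congr 1; omega, mul_assoc]
    have h4 : y % 2^k ≤ y % 2^(s-1) := by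
      have h1 : y % 2^k = (y % 2^(s-1)) % 2^k :=
        (Nat.mod_mod_of_dvd _ (pow_dvd_pow 2 (by omega))).symm
      rw [h1]
      exact Nat.mod_le _ _
    omega
  have e3 := congrArg (Nat.cast : ℕ → ZMod (2^s)) e2
  have hz2 : (2 : ZMod (2^s))^s = 0 := by
    have h5 := two_pow_s_eq_zero s
    push_cast at h5
    exact h5
  push_cast at e3
  rw [hz2, zero_mul, add_zero] at e3
  have hyx : ((y : ℕ) : ZMod (2^s)) = x := myCastVal x
  rw [hyx] at e3
  push_cast
  linear_combination -e3

theorem val_mod_add {s k : ℕ} (hk : k ≤ s) (a w : ZMod (2^s)) :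
    ZMod.val (a + ((2^k : ℕ) : ZMod (2^s)) * w) % 2^k = ZMod.val a % 2^k := by
  rw [ZMod.val_add, Nat.mod_mod_of_dvd _ (pow_dvd_pow 2 hk), Nat.add_mod]
  have hd : 2^k ∣ ZMod.val (((2^k : ℕ) : ZMod (2^s)) * w) := by
    rw [ZMod.val_mul]
    apply (Nat.dvd_mod_iff (pow_dvd_pow 2 hk)).mpr
    apply Dvd.dvd.mul_right
    rw [ZMod.val_natCast]
    exact (Nat.dvd_mod_iff (pow_dvd_pow 2 hk)).mpr dvd_rfl
  have h0 : ZMod.val (((2^k : ℕ) : ZMod (2^s)) * w) % 2^k = 0 := by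
    obtain ⟨c, hc⟩ := hd
    rw [hc]
    exact Nat.mul_mod_right _ _
  rw [h0, add_zero, Nat.mod_mod_of_dvd _ dvd_rfl]

theorem zmod_two_pow_s (s : ℕ) : (2 : ZMod (2^s))^s = 0 := by
  have h := two_pow_s_eq_zero s
  push_cast at h
  exact h

/-- The linear map whose range is the Hadamard code. -/
noncomputable def Lmap (s : ℕ) (t : ℕ → ℕ) :
    (Fin (tauSum s t) → ZMod (2^s)) →ₗ[ZMod (2^s)] (ColIdx s t → ZMod (2^s)) where
  toFun := fun lam z => ∑ q, lam q * z.val q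
  map_add' := by
    intro x y
    funext z
    simp [add_mul, Finset.sum_add_distrib]
  map_smul' := by
    intro c x
    funext z
    simp [Finset.mul_sum, mul_assoc]

theorem lmap_apply (s : ℕ) (t : ℕ → ℕ) (lam : Fin (tauSum s t) → ZMod (2^s)) (z : ColIdx s t) :
    Lmap s t lam z = ∑ q, lam q * z.val q := rfl

theorem row_eq_lmap (s : ℕ) (t : ℕ → ℕ) (q : Fin (tauSum s t)) :
    (fun z : ColIdx s t => z.val q) = Lmap s t (Pi.single q 1) := by
  funext z
  rw [lmap_apply]
  rw [Finset.sum_eq_single q]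
  · simp
  · intro b _ hb
    simp [Pi.single_apply, hb]
  · intro h
    exact absurd (Finset.mem_univ q) h

theorem lmap_mem (s : ℕ) (t : ℕ → ℕ) (lam : Fin (tauSum s t) → ZMod (2^s)) :
    Lmap s t lam ∈ hadamardCode s t := by
  have h1 : Lmap s t lam = ∑ q, lam q • (fun z : ColIdx s t => z.val q) := by
    funext z
    rw [lmap_apply]
    rw [Finset.sum_apply]
    rfl
  rw [h1]
  apply AddSubgroup.sum_mem
  intro q _
  have hmem : (fun z : ColIdx s t => z.val q) ∈ hadamardCode s t :=
    AddSubgroup.subset_closure ⟨q, rfl⟩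
  have h2 : lam q • (fun z : ColIdx s t => z.val q)
      = (ZMod.val (lam q)) • (fun z : ColIdx s t => z.val q) := by
    rw [← Nat.cast_smul_eq_nsmul (ZMod (2^s)), myCastVal]
  rw [h2]
  exact AddSubgroup.nsmul_mem _ hmem _

theorem had_eq_range (s : ℕ) (t : ℕ → ℕ) :
    (hadamardCode s t : Set (ColIdx s t → ZMod (2^s))) = Set.range (Lmap s t) := by
  apply subset_antisymm
  · intro v hv
    have hle : hadamardCode s t ≤ (LinearMap.range (Lmap s t)).toAddSubgroup := by
      rw [hadamardCode]
      apply (AddSubgroup.closure_le _).mpr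
      rintro _ ⟨q, rfl⟩
      exact ⟨Pi.single q 1, (row_eq_lmap s t q).symm⟩
    exact hle hv
  · rintro _ ⟨lam, rfl⟩
    exact lmap_mem s t lam

theorem blockIdx_spec (s : ℕ) (t : ℕ → ℕ) (hs : 1 ≤ s) (p : ℕ) (hp2 : p ≤ tauSum s t) :
    1 ≤ blockIdx t p ∧ blockIdx t p ≤ s ∧ p ≤ ∑ j ∈ Finset.Icc 1 (blockIdx t p), t j := by
  have hmem : s ∈ {i : ℕ | 1 ≤ i ∧ p ≤ ∑ j ∈ Finset.Icc 1 i, t j} := ⟨hs, hp2⟩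
  have h1 := Nat.sInf_mem (⟨s, hmem⟩ : Set.Nonempty _)
  exact ⟨h1.1, Nat.sInf_le hmem, h1.2⟩

theorem blockIdx_one (t : ℕ → ℕ) (ht : 1 ≤ t 1) : blockIdx t 1 = 1 := by
  have hmem : 1 ∈ {i : ℕ | 1 ≤ i ∧ 1 ≤ ∑ j ∈ Finset.Icc 1 i, t j} := by
    constructor
    · exact le_refl 1
    · simpa using ht
  apply le_antisymm
  · exact Nat.sInf_le hmem
  · exact (Nat.sInf_mem (⟨1, hmem⟩ : Set.Nonempty _)).1

theorem tauSum_pos (s : ℕ) (t : ℕ → ℕ) (hs : 1 ≤ s) (ht : 1 ≤ t 1) : 1 ≤ tauSum s t :=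
  le_trans ht (Finset.single_le_sum (f := t) (fun _ _ => Nat.zero_le _)
    (Finset.mem_Icc.mpr ⟨le_refl 1, hs⟩))

theorem tset_dvd {s : ℕ} (i : ℕ) {x : ZMod (2^s)} (hx : x ∈ Tset s i) (k : ℕ) (hk : k ≤ i - 1) :
    ∃ c : ZMod (2^s), x = ((2^k : ℕ) : ZMod (2^s)) * c := by
  obtain ⟨j, _, rfl⟩ := hx
  refine ⟨(j : ZMod (2^s)) * ((2^(i-1-k) : ℕ) : ZMod (2^s)), ?_⟩
  push_cast
  rw [show (2 : ZMod (2^s))^(i-1) = 2^k * 2^(i-1-k) by rw [← pow_add]; congr 1; omega]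
  ring

theorem tset_scaled_order2 {s : ℕ} (i : ℕ) (hi1 : 1 ≤ i) (his : i ≤ s) {x : ZMod (2^s)}
    (hx : x ∈ Tset s i) : 2 * (((2^(s-i) : ℕ) : ZMod (2^s)) * x) = 0 := by
  obtain ⟨j, _, rfl⟩ := hx
  push_cast
  rw [show (2 : ZMod (2^s)) * ((2:ZMod (2^s))^(s-i) * ((j:ZMod (2^s)) * 2^(i-1)))
      = (j : ZMod (2^s)) * (2^1 * 2^(s-i) * 2^(i-1)) by ring]
  rw [← pow_add, ← pow_add, show 1 + (s-i) + (i-1) = s by omega, zmod_two_pow_s, mul_zero]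

theorem mem_kernelSet_of_zxor {ι : Type} {s : ℕ} (Hs : Set (ι → ZMod (2^s)))
    (g : ι → ZMod (2^s)) (hK : ∀ v ∈ Hs, (fun z => zxor s (g z) (v z)) ∈ Hs) :
    PhiMap s g ∈ kernelSet (PhiMap s '' Hs) := by
  have hinv : ∀ v : ι → ZMod (2^s),
      PhiMap s g + PhiMap s (fun z => zxor s (g z) (v z)) = PhiMap s v := by
    intro v
    rw [← PhiMap_zxor]
    have h2 : (fun z => zxor s (g z) (zxor s (g z) (v z))) = v :=
      funext fun z => zxor_cancel (g z) (v z)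
    rw [h2]
  show (fun c => PhiMap s g + c) '' (PhiMap s '' Hs) = PhiMap s '' Hs
  apply subset_antisymm
  · rintro _ ⟨_, ⟨v, hv, rfl⟩, rfl⟩
    exact ⟨_, hK v hv, by simpa using PhiMap_zxor g v⟩
  · rintro _ ⟨v, hv, rfl⟩
    exact ⟨PhiMap s (fun z => zxor s (g z) (v z)), ⟨_, hK v hv, rfl⟩, by simpa using hinv v⟩

theorem coord_decomp {s : ℕ} {t : ℕ → ℕ} (kk : ℕ)
    (hdvd : ∀ (z : ColIdx s t) (q : Fin (tauSum s t)), 1 ≤ (q : ℕ) →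
      ∃ c, z.val q = ((2^kk : ℕ) : ZMod (2^s)) * c)
    (q0 : Fin (tauSum s t)) (hq0 : (q0 : ℕ) = 0)
    (lam : Fin (tauSum s t) → ZMod (2^s)) (z : ColIdx s t) :
    ∃ w, Lmap s t lam z = lam q0 + ((2^kk : ℕ) : ZMod (2^s)) * w := by
  have hrest : ∀ q : Fin (tauSum s t),
      ∃ c, q ≠ q0 → lam q * z.val q = ((2^kk : ℕ) : ZMod (2^s)) * c := by
    intro q
    by_cases hq : q = q0
    · exact ⟨0, fun h => absurd hq h⟩
    · have hq1 : 1 ≤ (q : ℕ) := by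
        rcases Nat.eq_zero_or_pos (q : ℕ) with h | h
        · exact absurd (Fin.ext (h.trans hq0.symm)) hq
        · exact h
      obtain ⟨c, hc⟩ := hdvd z q hq1
      exact ⟨lam q * c, fun _ => by rw [hc]; ring⟩
  choose c hc using hrest
  refine ⟨∑ q ∈ Finset.univ.erase q0, c q, ?_⟩
  rw [lmap_apply, ← Finset.add_sum_erase _ _ (Finset.mem_univ q0)]
  rw [z.prop.1 q0 hq0, mul_one]
  congr 1
  rw [Finset.mul_sum]
  exact Finset.sum_congr rfl (fun q hq => hc q (Finset.ne_of_mem_erase hq))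

theorem zxor_assoc {s : ℕ} (a b c : ZMod (2^s)) :
    zxor s (zxor s a b) c = zxor s a (zxor s b c) := by
  show ((ZMod.val (zxor s a b) ^^^ ZMod.val c : ℕ) : ZMod (2^s))
    = ((ZMod.val a ^^^ ZMod.val (zxor s b c) : ℕ) : ZMod (2^s))
  rw [zxor_val, zxor_val, Nat.xor_assoc]

/-- The scaled row generators (order two). -/
noncomputable def genA (s : ℕ) (t : ℕ → ℕ) (q : Fin (tauSum s t)) :
    ColIdx s t → ZMod (2^s) :=
  fun z => ((2^(s - blockIdx t ((q : ℕ)+1)) : ℕ) : ZMod (2^s)) * z.val q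

/-- Constant codewords. -/
def constFn (s : ℕ) (t : ℕ → ℕ) (c : ZMod (2^s)) : ColIdx s t → ZMod (2^s) := fun _ => c

theorem single_lmap (s : ℕ) (t : ℕ → ℕ) (a : ZMod (2^s)) (q : Fin (tauSum s t)) :
    (fun z : ColIdx s t => a * z.val q) = Lmap s t (Pi.single q a) := by
  funext z
  rw [lmap_apply, Finset.sum_eq_single q]
  · simp
  · intro b _ hb
    simp [Pi.single_apply, hb]
  · intro h
    exact absurd (Finset.mem_univ q) h

theorem genA_mem (s : ℕ) (t : ℕ → ℕ) (q : Fin (tauSum s t)) :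
    genA s t q ∈ hadamardCode s t := by
  rw [show genA s t q = Lmap s t (Pi.single q ((2^(s - blockIdx t ((q : ℕ)+1)) : ℕ) : ZMod (2^s)))
    from single_lmap s t _ q]
  exact lmap_mem s t _

theorem const_mem (s : ℕ) (t : ℕ → ℕ) (hs : 1 ≤ s) (ht : 1 ≤ t 1) (c : ZMod (2^s)) :
    constFn s t c ∈ hadamardCode s t := by
  have hq0 : (0 : ℕ) < tauSum s t := tauSum_pos s t hs ht
  set q0 : Fin (tauSum s t) := ⟨0, hq0⟩
  have : constFn s t c = fun z : ColIdx s t => c * z.val q0 := by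
    funext z
    rw [z.prop.1 q0 rfl, mul_one]
    rfl
  rw [this, single_lmap]
  exact lmap_mem s t _

theorem genA_order2 (s : ℕ) (t : ℕ → ℕ) (hs : 1 ≤ s) (ht : 1 ≤ t 1)
    (q : Fin (tauSum s t)) (z : ColIdx s t) : 2 * genA s t q z = 0 := by
  unfold genA
  rcases Nat.eq_zero_or_pos (q : ℕ) with h0 | h1
  · rw [z.prop.1 q h0, mul_one, h0, blockIdx_one t ht]
    rw [show (2 : ZMod (2^s)) * ((2^(s-1) : ℕ) : ZMod (2^s)) = ((2 * 2^(s-1) : ℕ) : ZMod (2^s))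
      by push_cast; ring]
    rw [show (2 * 2^(s-1) : ℕ) = 2^s by rw [← pow_succ']; congr 1; omega]
    exact two_pow_s_eq_zero s
  · have hq2 : (q : ℕ) + 1 ≤ tauSum s t := q.2
    obtain ⟨hb1, hb2, _⟩ := blockIdx_spec s t hs ((q : ℕ)+1) hq2
    exact tset_scaled_order2 _ hb1 hb2 (z.prop.2 q h1)

theorem genA_kernel (s : ℕ) (t : ℕ → ℕ) (hs : 1 ≤ s) (ht : 1 ≤ t 1) (q : Fin (tauSum s t)) :
    PhiMap s (genA s t q) ∈
      kernelSet (PhiMap s '' (hadamardCode s t : Set (ColIdx s t → ZMod (2^s)))) := by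
  apply mem_kernelSet_of_zxor
  intro v hv
  have h1 : (fun z => zxor s (genA s t q z) (v z)) = genA s t q + v :=
    funext fun z => zxor_order2 hs (genA_order2 s t hs ht q z) (v z)
  rw [h1]
  exact AddSubgroup.add_mem _ (genA_mem s t q) hv

theorem genB_kernel (s : ℕ) (t : ℕ → ℕ) (hs : 1 ≤ s) (ht : 1 ≤ t 1) (kk : ℕ) (hkk : kk ≤ s)
    (hdvd : ∀ (z : ColIdx s t) (q : Fin (tauSum s t)), 1 ≤ (q : ℕ) →
      ∃ c, z.val q = ((2^kk : ℕ) : ZMod (2^s)) * c)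
    (a : ZMod (2^s)) (ha : ZMod.val a < 2^kk) :
    PhiMap s (constFn s t a) ∈
      kernelSet (PhiMap s '' (hadamardCode s t : Set (ColIdx s t → ZMod (2^s)))) := by
  apply mem_kernelSet_of_zxor
  intro v hv
  rw [had_eq_range] at hv
  obtain ⟨lam, rfl⟩ := hv
  set q0 : Fin (tauSum s t) := ⟨0, tauSum_pos s t hs ht⟩
  set d : ZMod (2^s) :=
    a - 2 * (((ZMod.val a &&& (ZMod.val (lam q0) % 2^kk)) : ℕ) : ZMod (2^s)) with hd
  have h1 : (fun z => zxor s (constFn s t a z) (Lmap s t lam z))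
      = Lmap s t lam + constFn s t d := by
    funext z
    have hmod : ZMod.val (Lmap s t lam z) % 2^kk = ZMod.val (lam q0) % 2^kk := by
      obtain ⟨w, hw⟩ := coord_decomp kk hdvd q0 rfl lam z
      rw [hw]
      exact val_mod_add hkk _ _
    show zxor s a (Lmap s t lam z) = Lmap s t lam z + d
    rw [zxor_low ha (Lmap s t lam z), hmod]
  rw [h1]
  exact AddSubgroup.add_mem _ (lmap_mem s t lam) (const_mem s t hs ht d)

theorem genC_kernel (s : ℕ) (t : ℕ → ℕ) (hs : 1 ≤ s) (ht : 1 ≤ t 1) (kk : ℕ) (hkk : kk < s - 1)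
    (hdvd : ∀ (z : ColIdx s t) (q : Fin (tauSum s t)), 1 ≤ (q : ℕ) →
      ∃ c, z.val q = ((2^kk : ℕ) : ZMod (2^s)) * c) :
    PhiMap s (constFn s t ((2^(s-1) - 2^kk : ℕ) : ZMod (2^s))) ∈
      kernelSet (PhiMap s '' (hadamardCode s t : Set (ColIdx s t → ZMod (2^s)))) := by
  apply mem_kernelSet_of_zxor
  intro v hv
  rw [had_eq_range] at hv
  obtain ⟨lam, rfl⟩ := hv
  set q0 : Fin (tauSum s t) := ⟨0, tauSum_pos s t hs ht⟩
  set e : ZMod (2^s) := ((2^(s-1) - 2^kk : ℕ) : ZMod (2^s))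
      + 2 * ((ZMod.val (lam q0) % 2^kk : ℕ) : ZMod (2^s)) with he
  have h1 : (fun z => zxor s (constFn s t ((2^(s-1) - 2^kk : ℕ) : ZMod (2^s)) z)
        (Lmap s t lam z)) = constFn s t e - Lmap s t lam := by
    funext z
    have hmod : ZMod.val (Lmap s t lam z) % 2^kk = ZMod.val (lam q0) % 2^kk := by
      obtain ⟨w, hw⟩ := coord_decomp kk hdvd q0 rfl lam z
      rw [hw]
      exact val_mod_add (by omega) _ _
    show zxor s ((2^(s-1) - 2^kk : ℕ) : ZMod (2^s)) (Lmap s t lam z)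
      = e - Lmap s t lam z
    rw [zxor_mid kk hkk (Lmap s t lam z), hmod, he]
  rw [h1]
  exact AddSubgroup.sub_mem _ (const_mem s t hs ht e) (lmap_mem s t lam)

theorem linear_of_allconst (s : ℕ) (t : ℕ → ℕ) (hs : 1 ≤ s) (ht : 1 ≤ t 1)
    (hdvd2 : ∀ (z : ColIdx s t) (q : Fin (tauSum s t)), 1 ≤ (q : ℕ) → 2 * z.val q = 0) :
    IsLinearCode (PhiMap s '' (hadamardCode s t : Set (ColIdx s t → ZMod (2^s)))) := by
  set q0 : Fin (tauSum s t) := ⟨0, tauSum_pos s t hs ht⟩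
  have key : ∀ lam : Fin (tauSum s t) → ZMod (2^s), ∀ z : ColIdx s t,
      2 * (Lmap s t lam z - lam q0) = 0 := by
    intro lam z
    rw [lmap_apply, ← Finset.add_sum_erase _ _ (Finset.mem_univ q0), z.prop.1 q0 rfl, mul_one,
      add_sub_cancel_left, Finset.mul_sum]
    apply Finset.sum_eq_zero
    intro q hq
    have hq1 : 1 ≤ (q : ℕ) := by
      rcases Nat.eq_zero_or_pos (q : ℕ) with h | h
      · exact absurd (Fin.ext h) (Finset.ne_of_mem_erase hq)
      · exact h
    rw [show (2 : ZMod (2^s)) * (lam q * z.val q) = lam q * (2 * z.val q) by ring,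
      hdvd2 z q hq1, mul_zero]
  rintro _ ⟨u, hu, rfl⟩ _ ⟨v, hv, rfl⟩
  rw [← PhiMap_zxor]
  refine ⟨_, ?_, rfl⟩
  rw [had_eq_range] at hu hv
  obtain ⟨lam, rfl⟩ := hu
  obtain ⟨mu, rfl⟩ := hv
  have hform : (fun z => zxor s (Lmap s t lam z) (Lmap s t mu z))
      = (Lmap s t lam - constFn s t (lam q0))
        + ((Lmap s t mu - constFn s t (mu q0)) + constFn s t (zxor s (lam q0) (mu q0))) := by
    funext z
    show zxor s (Lmap s t lam z) (Lmap s t mu z)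
      = (Lmap s t lam z - lam q0) + ((Lmap s t mu z - mu q0) + zxor s (lam q0) (mu q0))
    have h1 : Lmap s t lam z = zxor s (Lmap s t lam z - lam q0) (lam q0) := by
      rw [zxor_order2 hs (key lam z) (lam q0), sub_add_cancel]
    have h2 : Lmap s t mu z = zxor s (Lmap s t mu z - mu q0) (mu q0) := by
      rw [zxor_order2 hs (key mu z) (mu q0), sub_add_cancel]
    have h3 : zxor s (lam q0) (zxor s (Lmap s t mu z - mu q0) (mu q0))
        = zxor s (Lmap s t mu z - mu q0) (zxor s (lam q0) (mu q0)) := by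
      rw [← zxor_assoc, zxor_comm (lam q0) (Lmap s t mu z - mu q0), zxor_assoc]
    conv_lhs => rw [h1, h2, zxor_assoc, h3, zxor_order2 hs (key mu z),
      zxor_order2 hs (key lam z)]
  rw [hform]
  show _ ∈ hadamardCode s t
  have hc1 := const_mem s t hs ht (lam q0)
  have hc2 := const_mem s t hs ht (mu q0)
  have hc3 := const_mem s t hs ht (zxor s (lam q0) (mu q0))
  exact AddSubgroup.add_mem _ (AddSubgroup.sub_mem _ (lmap_mem s t lam) hc1)
    (AddSubgroup.add_mem _ (AddSubgroup.sub_mem _ (lmap_mem s t mu) hc2) hc3)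

theorem zero_mem_Tset (s i : ℕ) : (0 : ZMod (2^s)) ∈ Tset s i :=
  ⟨0, by positivity, by simp⟩

noncomputable def zcol0 (s : ℕ) (t : ℕ → ℕ) : ColIdx s t :=
  ⟨fun q => if (q : ℕ) = 0 then 1 else 0, by
    constructor
    · intro q hq; simp [hq]
    · intro q hq
      have h : ¬((q : ℕ) = 0) := by omega
      simp only [h, if_false]
      exact zero_mem_Tset s _⟩

noncomputable def zcolq (s : ℕ) (t : ℕ → ℕ) (q1 : Fin (tauSum s t)) : ColIdx s t :=
  ⟨fun q => if (q : ℕ) = 0 then 1 else if q = q1 then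
      ((2^(blockIdx t ((q1 : ℕ)+1) - 1) : ℕ) : ZMod (2^s)) else 0, by
    constructor
    · intro q hq; simp [hq]
    · intro q hq
      have h : ¬((q : ℕ) = 0) := by omega
      simp only [h, if_false]
      by_cases hq1 : q = q1
      · subst hq1
        simp only [if_pos rfl]
        refine ⟨1, ?_, by push_cast; ring⟩
        exact Nat.one_lt_two_pow (by omega)
      · simp only [hq1, if_false]
        exact zero_mem_Tset s _⟩

theorem gdigit_nat (s x i : ℕ) (hx : x < 2^s) :
    gdigit s ((x : ℕ) : ZMod (2^s)) i = if x.testBit i then 1 else 0 := by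
  unfold gdigit
  rw [ZMod.val_cast_of_lt hx]

theorem gdigit_zero' (s i : ℕ) : gdigit s (0 : ZMod (2^s)) i = 0 := by
  unfold gdigit
  rw [ZMod.val_zero]
  simp [Nat.zero_testBit]

theorem gdigit_pow (s j d : ℕ) (hj : j < s) :
    gdigit s ((2^j : ℕ) : ZMod (2^s)) d = if d = j then 1 else 0 := by
  rw [gdigit_nat s _ d (Nat.pow_lt_pow_right (by norm_num) hj), Nat.testBit_two_pow]
  by_cases h : d = j <;> simp [h]
  · intro hc; exact absurd hc.symm h

theorem gdigit_mid (s k d : ℕ) (hk : k < s - 1) :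
    gdigit s ((2^(s-1) - 2^k : ℕ) : ZMod (2^s)) d
      = if k ≤ d ∧ d < s - 1 then 1 else 0 := by
  have hlt : 2^(s-1) - 2^k < 2^s :=
    lt_of_le_of_lt (Nat.sub_le _ _) (Nat.pow_lt_pow_right (by norm_num) (by omega))
  rw [gdigit_nat s _ d hlt, myMidBit k s hk]
  by_cases h1 : k ≤ d <;> by_cases h2 : d < s - 1 <;> simp [h1, h2]

theorem genA_zcol0 (s : ℕ) (t : ℕ → ℕ) (ht : 1 ≤ t 1) (q' : Fin (tauSum s t)) :
    genA s t q' (zcol0 s t) =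
      if (q' : ℕ) = 0 then ((2^(s-1) : ℕ) : ZMod (2^s)) else 0 := by
  unfold genA zcol0
  by_cases h : (q' : ℕ) = 0
  · simp [h, blockIdx_one t ht]
  · simp [h]

theorem genA_zcolq (s : ℕ) (t : ℕ → ℕ) (hs : 1 ≤ s) (ht : 1 ≤ t 1)
    (q1 : Fin (tauSum s t)) (q' : Fin (tauSum s t)) :
    genA s t q' (zcolq s t q1) =
      if (q' : ℕ) = 0 then ((2^(s-1) : ℕ) : ZMod (2^s))
      else if q' = q1 then ((2^(s-1) : ℕ) : ZMod (2^s)) else 0 := by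
  unfold genA zcolq
  by_cases h : (q' : ℕ) = 0
  · simp [h, blockIdx_one t ht]
  · by_cases h2 : q' = q1
    · subst h2
      simp only [h, if_false, if_pos rfl, if_true]
      rw [← Nat.cast_mul, ← pow_add]
      obtain ⟨hb1, hb2, _⟩ := blockIdx_spec s t hs ((q' : ℕ)+1) q'.2
      rw [show s - blockIdx t ((q' : ℕ)+1) + (blockIdx t ((q' : ℕ)+1) - 1) = s - 1 by omega]
    · simp [h, h2]

theorem gray_at_zero {s : ℕ} (u : ZMod (2^s)) :
    gray s u (fun _ => 0) = gdigit s u (s-1) := by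
  unfold gray
  simp

theorem gray_at_single {s : ℕ} (u : ZMod (2^s)) (i0 : Fin (s-1)) :
    gray s u (Pi.single i0 1) = gdigit s u (s-1) + gdigit s u (i0 : ℕ) := by
  unfold gray
  congr 1
  rw [Finset.sum_eq_single i0]
  · simp
  · intro b _ hb
    simp [Pi.single_apply, hb]
  · intro h
    exact absurd (Finset.mem_univ i0) h

theorem sum_isolate {ι' : Type} [Fintype ι'] [DecidableEq ι'] (g f : ι' → ZMod 2) (i0 : ι')
    (hsum : ∑ i, g i * f i = 0) (hf : f i0 = 1) (h0 : ∀ i, i ≠ i0 → g i * f i = 0) :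
    g i0 = 0 := by
  rw [Finset.sum_eq_single i0 (fun b _ hb => h0 b hb)
    (fun h => absurd (Finset.mem_univ i0) h), hf, mul_one] at hsum
  exact hsum

theorem main_bound (s : ℕ) (hs : 2 ≤ s) (t : ℕ → ℕ) (ht : 1 ≤ t 1) (σv : ℕ)
    (hσ1 : 1 ≤ σv) (hσs : σv ≤ s - 1)
    (hblock : ∀ q : Fin (tauSum s t), 1 ≤ (q : ℕ) → σv ≤ blockIdx t ((q : ℕ)+1)) :
    σv + tauSum s t ≤
      kerDim (PhiMap s '' (hadamardCode s t : Set (ColIdx s t → ZMod (2^s)))) := by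
  classical
  have hs1 : 1 ≤ s := by omega
  set C : Set ((ColIdx s t × (Fin (s-1) → ZMod 2)) → ZMod 2) :=
    PhiMap s '' (hadamardCode s t : Set (ColIdx s t → ZMod (2^s))) with hC
  have hdvd : ∀ (z : ColIdx s t) (q : Fin (tauSum s t)), 1 ≤ (q : ℕ) →
      ∃ c, z.val q = ((2^(σv-1) : ℕ) : ZMod (2^s)) * c := by
    intro z q hq
    exact tset_dvd _ (z.prop.2 q hq) (σv-1) (by have := hblock q hq; omega)
  set cnat : Fin σv → ℕ :=
    fun j => if (j : ℕ) = σv - 1 then 2^(s-1) - 2^(σv-1) else 2^(j : ℕ) with hcnat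
  set G : (Fin (tauSum s t) ⊕ Fin σv) → ColIdx s t → ZMod (2^s) :=
    Sum.elim (fun q => genA s t q) (fun j => constFn s t ((cnat j : ℕ) : ZMod (2^s))) with hG
  set vec : (Fin (tauSum s t) ⊕ Fin σv) → (ColIdx s t × (Fin (s-1) → ZMod 2)) → ZMod 2 :=
    fun i => PhiMap s (G i) with hvec
  -- kernel membership
  have hker : ∀ i, vec i ∈ kernelSet C := by
    rintro (q | j)
    · exact genA_kernel s t hs1 ht q
    · show PhiMap s (constFn s t ((cnat j : ℕ) : ZMod (2^s))) ∈ kernelSet C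
      by_cases hj : (j : ℕ) = σv - 1
      · simp only [hcnat]
        rw [if_pos hj]
        exact genC_kernel s t hs1 ht (σv-1) (by omega) hdvd
      · simp only [hcnat]
        rw [if_neg hj]
        apply genB_kernel s t hs1 ht (σv-1) (by omega) hdvd
        rw [ZMod.val_cast_of_lt (Nat.pow_lt_pow_right (by norm_num) (by omega))]
        exact Nat.pow_lt_pow_right (by norm_num) (by omega)
  -- linear independence
  have hind : LinearIndependent (ZMod 2) vec := by
    rw [Fintype.linearIndependent_iff]
    intro g hg
    have heval : ∀ (z : ColIdx s t) (y : Fin (s-1) → ZMod 2),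
        ∑ i, g i * gray s (G i z) y = 0 := by
      intro z y
      have h := congrFun hg (z, y)
      rw [Finset.sum_apply] at h
      simpa [hvec, PhiMap, smul_eq_mul] using h
    have hD : ∀ (z : ColIdx s t) (d : ℕ), d < s →
        ∑ i, g i * gdigit s (G i z) d = 0 := by
      intro z d hd
      by_cases hds : d = s - 1
      · subst hds
        have h0 := heval z (fun _ => 0)
        simpa only [gray_at_zero] using h0
      · have hd1 : d < s - 1 := by omega
        have h1 := heval z (Pi.single ⟨d, hd1⟩ 1)
        have h0 := heval z (fun _ => 0)
        simp only [gray_at_single, gray_at_zero] at h1 h0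
        have h2 : ∑ i, g i * gdigit s (G i z) d
            = (∑ i, g i * (gdigit s (G i z) (s-1) + gdigit s (G i z) d))
              - ∑ i, g i * gdigit s (G i z) (s-1) := by
          rw [← Finset.sum_sub_distrib]
          apply Finset.sum_congr rfl
          intro i _
          ring
        rw [h2, h1, h0, sub_zero]
    -- step 1: all constants vanish
    have hstep1 : ∀ j : Fin σv, g (Sum.inr j) = 0 := by
      intro j0
      apply sum_isolate g _ (Sum.inr j0) (hD (zcol0 s t) (j0 : ℕ) (by omega))
      · -- f (inr j0) = 1
        show gdigit s (G (Sum.inr j0) (zcol0 s t)) (j0 : ℕ) = 1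
        rw [hG]
        show gdigit s ((cnat j0 : ℕ) : ZMod (2^s)) (j0 : ℕ) = 1
        simp only [hcnat]
        by_cases hj : (j0 : ℕ) = σv - 1
        · rw [if_pos hj, gdigit_mid s (σv-1) _ (by omega)]
          rw [hj, if_pos ⟨le_refl _, by omega⟩]
        · rw [if_neg hj]
          rw [gdigit_pow s _ _ (by have := j0.2; omega), if_pos rfl]
      · rintro (q | j) hne
        · -- rows contribute 0 at column zcol0 digit j0 < s-1
          show g (Sum.inl q) * gdigit s (G (Sum.inl q) (zcol0 s t)) (j0 : ℕ) = 0
          rw [hG]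
          show g (Sum.inl q) * gdigit s (genA s t q (zcol0 s t)) (j0 : ℕ) = 0
          rw [genA_zcol0 s t ht q]
          by_cases h : (q : ℕ) = 0
          · rw [if_pos h, gdigit_pow s _ _ (by omega),
              if_neg (by have := j0.2; omega), mul_zero]
          · rw [if_neg h, gdigit_zero', mul_zero]
        · show g (Sum.inr j) * gdigit s (G (Sum.inr j) (zcol0 s t)) (j0 : ℕ) = 0
          rw [hG]
          show g (Sum.inr j) * gdigit s ((cnat j : ℕ) : ZMod (2^s)) (j0 : ℕ) = 0
          have hjj : j ≠ j0 := fun h => hne (by rw [h])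
          simp only [hcnat]
          by_cases hj : (j : ℕ) = σv - 1
          · rw [if_pos hj]
            rw [gdigit_mid s (σv-1) _ (by omega)]
            have hj0 : ¬(σv - 1 ≤ (j0 : ℕ) ∧ (j0 : ℕ) < s - 1) := by
              have h1 : (j0 : ℕ) < σv := j0.2
              have h2 : (j0 : ℕ) ≠ σv - 1 := by
                intro hc
                exact hjj (Fin.ext (hj.trans hc.symm))
              omega
            rw [if_neg hj0, mul_zero]
          · rw [if_neg hj]
            rw [gdigit_pow s _ _ (by have := j.2; omega)]
            have : (j0 : ℕ) ≠ (j : ℕ) := fun h => hjj (Fin.ext h.symm)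
            rw [if_neg this, mul_zero]
    -- step 2: the first row generator vanishes
    have hq0 : (0 : ℕ) < tauSum s t := tauSum_pos s t hs1 ht
    set q0 : Fin (tauSum s t) := ⟨0, hq0⟩ with hq0def
    have hstep2 : g (Sum.inl q0) = 0 := by
      apply sum_isolate g _ (Sum.inl q0) (hD (zcol0 s t) (s-1) (by omega))
      · show gdigit s (G (Sum.inl q0) (zcol0 s t)) (s-1) = 1
        rw [hG]
        show gdigit s (genA s t q0 (zcol0 s t)) (s-1) = 1
        rw [genA_zcol0 s t ht q0, if_pos rfl, gdigit_pow s _ _ (by omega), if_pos rfl]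
      · rintro (q | j) hne
        · show g (Sum.inl q) * gdigit s (genA s t q (zcol0 s t)) (s-1) = 0
          have h : ¬((q : ℕ) = 0) := by
            intro h
            exact hne (by rw [Sum.inl.injEq]; exact Fin.ext h)
          rw [genA_zcol0 s t ht q, if_neg h, gdigit_zero', mul_zero]
        · show g (Sum.inr j) * gdigit s ((cnat j : ℕ) : ZMod (2^s)) (s-1) = 0
          rw [hstep1 j, zero_mul]
    -- step 3: all row generators vanish
    have hstep3 : ∀ q1 : Fin (tauSum s t), g (Sum.inl q1) = 0 := by
      intro q1
      by_cases hq1 : (q1 : ℕ) = 0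
      · rw [show q1 = q0 from Fin.ext hq1]
        exact hstep2
      · have hq1' : 1 ≤ (q1 : ℕ) := by omega
        apply sum_isolate g _ (Sum.inl q1) (hD (zcolq s t q1) (s-1) (by omega))
        · show gdigit s (genA s t q1 (zcolq s t q1)) (s-1) = 1
          rw [genA_zcolq s t hs1 ht q1 q1, if_neg hq1, if_pos rfl,
            gdigit_pow s _ _ (by omega), if_pos rfl]
        · rintro (q | j) hne
          · show g (Sum.inl q) * gdigit s (genA s t q (zcolq s t q1)) (s-1) = 0
            by_cases h : (q : ℕ) = 0
            · rw [show q = q0 from Fin.ext h, hstep2, zero_mul]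
            · have hqq1 : ¬(q = q1) := fun hc => hne (by rw [hc])
              rw [genA_zcolq s t hs1 ht q1 q, if_neg h, if_neg hqq1, gdigit_zero', mul_zero]
          · show g (Sum.inr j) * gdigit s ((cnat j : ℕ) : ZMod (2^s)) (s-1) = 0
            rw [hstep1 j, zero_mul]
    rintro (q | j)
    · exact hstep3 q
    · exact hstep1 j
  -- dimension count
  have hspan : Submodule.span (ZMod 2) (Set.range vec)
      ≤ Submodule.span (ZMod 2) (kernelSet C) :=
    Submodule.span_mono (Set.range_subset_iff.mpr hker)
  have hcard : Fintype.card (Fin (tauSum s t) ⊕ Fin σv) = σv + tauSum s t := by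
    simp [add_comm]
  calc σv + tauSum s t = Fintype.card (Fin (tauSum s t) ⊕ Fin σv) := hcard.symm
    _ = Module.finrank (ZMod 2) (Submodule.span (ZMod 2) (Set.range vec)) :=
        (finrank_span_eq_card hind).symm
    _ ≤ Module.finrank (ZMod 2) (Submodule.span (ZMod 2) (kernelSet C)) :=
        Submodule.finrank_mono hspan
    _ = kerDim C := rfl

theorem kerDim_ge (s : ℕ) (hs : 2 ≤ s) (t : ℕ → ℕ) (ht : 1 ≤ t 1)
    (hnl : ¬ IsLinearCode (PhiMap s '' (hadamardCode s t : Set (ColIdx s t → ZMod (2^s))))) :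
    sigmaIdx s t + ∑ i ∈ Finset.Icc 1 s, t i ≤
      kerDim (PhiMap s '' (hadamardCode s t : Set (ColIdx s t → ZMod (2^s)))) := by
  have hs1 : 1 ≤ s := by omega
  show sigmaIdx s t + tauSum s t ≤ _
  by_cases h1 : 1 < t 1
  · rw [show sigmaIdx s t = 1 from by unfold sigmaIdx; rw [if_pos h1]]
    refine main_bound s hs t ht 1 le_rfl (by omega) ?_
    intro q hq
    exact (blockIdx_spec s t hs1 ((q : ℕ)+1) q.2).1
  · have ht1 : t 1 = 1 := by omega
    have hσdef : sigmaIdx s t = sInf {i : ℕ | 2 ≤ i ∧ i ≤ s ∧ 0 < t i} := by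
      unfold sigmaIdx
      rw [if_neg h1]
    by_cases hSne : {i : ℕ | 2 ≤ i ∧ i ≤ s ∧ 0 < t i}.Nonempty
    · obtain ⟨h2σ, hσles, htσ⟩ := Nat.sInf_mem hSne
      set σv := sInf {i : ℕ | 2 ≤ i ∧ i ≤ s ∧ 0 < t i} with hσv
      have hzero : ∀ i, 2 ≤ i → i < σv → t i = 0 := by
        intro i h2 hlt
        by_contra hne
        have hmem : i ∈ {i : ℕ | 2 ≤ i ∧ i ≤ s ∧ 0 < t i} :=
          ⟨h2, by omega, Nat.pos_of_ne_zero hne⟩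
        exact absurd (Nat.sInf_le hmem) (by omega)
      have hblock : ∀ q : Fin (tauSum s t), 1 ≤ (q : ℕ) → σv ≤ blockIdx t ((q : ℕ)+1) := by
        intro q hq
        by_contra hlt
        push_neg at hlt
        obtain ⟨hb1, _, hb3⟩ := blockIdx_spec s t hs1 ((q : ℕ)+1) q.2
        have hsum : ∑ j ∈ Finset.Icc 1 (blockIdx t ((q : ℕ)+1)), t j = t 1 := by
          apply Finset.sum_eq_single_of_mem 1 (Finset.mem_Icc.mpr ⟨le_refl 1, hb1⟩)
          intro b hb hbne
          have hb' := Finset.mem_Icc.mp hb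
          exact hzero b (by omega) (by omega)
        omega
      by_cases hσs' : σv = s
      · exfalso
        apply hnl
        apply linear_of_allconst s t hs1 ht
        intro z q hq
        obtain ⟨hb1, hb2, _⟩ := blockIdx_spec s t hs1 ((q : ℕ)+1) q.2
        have hbeq : blockIdx t ((q : ℕ)+1) = s :=
          le_antisymm hb2 (by have := hblock q hq; omega)
        have h2 := tset_scaled_order2 _ hb1 hb2 (z.prop.2 q hq)
        rw [hbeq, Nat.sub_self, pow_zero, Nat.cast_one, one_mul] at h2
        exact h2
      · rw [hσdef]
        exact main_bound s hs t ht σv (by omega) (by omega) hblock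
    · exfalso
      apply hnl
      apply linear_of_allconst s t hs1 ht
      intro z q hq
      exfalso
      have hzero : ∀ i, 2 ≤ i → i ≤ s → t i = 0 := by
        intro i h2 his
        by_contra hne
        exact hSne ⟨i, h2, his, Nat.pos_of_ne_zero hne⟩
      have hτ : tauSum s t = 1 := by
        rw [tauSum, Finset.sum_eq_single_of_mem 1 (Finset.mem_Icc.mpr ⟨le_refl 1, hs1⟩)]
        · exact ht1
        · intro b hb hbne
          have hb' := Finset.mem_Icc.mp hb
          exact hzero b (by omega) (by omega)
      have hq2 := q.2
      omega
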